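/- arXiv:2402.10707 — 2 statements merged into one kernel-verified Lean document; each statement's English description precedes it below -/
import Mathlib

section
/- (Corollary B3, first criterion for non-steepness.) Let n ≥ 2 be an integer, I₀ ∈ ℝⁿ, ϱ > 0, and let h be real-analytic on the open ball B(I₀,ϱ) with ∇h(I₀) ≠ 0. Suppose there exists a unit vector w ∈ ℝⁿ such that h^k_{I₀}[w,…,w] = 0 for every integer k ≥ 1. Then, setting Γ := span(w), the subspace Γ is orthogonal to ∇h(I₀) and π_Γ ∇h(I₀ + t·w) = 0 for every t ∈ (−ϱ,ϱ); consequently h is not steep at I₀: for every C > 0, δ > 0 and α ≥ 1, the steepness inequality at I₀ on Γ with coefficients C, δ and index α fails. -/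
open Metric Set
open scoped RealInnerProductSpace

noncomputable section

/-- The steepness inequality at `I` on `Γ` with coefficients `C, δ` and index `α`:
for every `ξ ∈ (0,δ]`,
`max_{η∈[0,ξ]} min_{u∈Γ, ‖u‖=η} ‖π_Γ ∇f(I+u)‖ > C ξ^α`,
where `π_Γ` is the orthogonal projection onto `Γ`. -/
def SteepAt {n : ℕ} (f : EuclideanSpace ℝ (Fin n) → ℝ) (I : EuclideanSpace ℝ (Fin n))
    (Γ : Submodule ℝ (EuclideanSpace ℝ (Fin n))) (C δ α : ℝ) : Prop :=
  ∀ ξ ∈ Set.Ioc (0:ℝ) δ, ∃ η ∈ Set.Icc (0:ℝ) ξ, ∀ u ∈ Γ, ‖u‖ = η →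
    C * ξ ^ α < ‖(Γ.orthogonalProjectionOnto (gradient f (I + u)) : EuclideanSpace ℝ (Fin n))‖

/-- Corollary B3, first criterion for non-steepness. -/
theorem statement6 (n : ℕ) (hn : 2 ≤ n) (I₀ : EuclideanSpace ℝ (Fin n)) (ϱ : ℝ)
    (hϱ : 0 < ϱ) (h : EuclideanSpace ℝ (Fin n) → ℝ)
    (hreg : AnalyticOnNhd ℝ h (ball I₀ ϱ))
    (hgrad : gradient h I₀ ≠ 0)
    (w : EuclideanSpace ℝ (Fin n)) (hw : ‖w‖ = 1)
    (hvan : ∀ k : ℕ, 1 ≤ k → iteratedFDeriv ℝ k h I₀ (fun _ => w) = 0) :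
    (∀ u ∈ Submodule.span ℝ {w}, ⟪u, gradient h I₀⟫ = 0) ∧
    (∀ t ∈ Set.Ioo (-ϱ) ϱ,
      (Submodule.span ℝ {w}).orthogonalProjectionOnto (gradient h (I₀ + t • w)) = 0) ∧
    (∀ C > (0:ℝ), ∀ δ > (0:ℝ), ∀ α : ℝ, 1 ≤ α →
      ¬ SteepAt h I₀ (Submodule.span ℝ {w}) C δ α) := by
  -- the curve φ t = I₀ + t • w
  set φ : ℝ → EuclideanSpace ℝ (Fin n) := fun t => I₀ + t • w with hφ
  -- inner products with the gradient are directional derivatives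
  have hinner : ∀ x : EuclideanSpace ℝ (Fin n), DifferentiableAt ℝ h x →
      ⟪gradient h x, w⟫ = fderiv ℝ h x w := by
    intro x _
    simp [gradient, InnerProductSpace.toDual_symm_apply]
  -- membership of curve points in the ball
  have hmem : ∀ t ∈ Set.Ioo (-ϱ) ϱ, φ t ∈ ball I₀ ϱ := by
    intro t ht
    simp only [hφ, mem_ball, dist_eq_norm, add_sub_cancel_left, norm_smul, hw, mul_one,
      Real.norm_eq_abs]
    exact abs_lt.2 ⟨ht.1, ht.2⟩
  have hI₀mem : I₀ ∈ ball I₀ ϱ := mem_ball_self hϱ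
  -- the directional derivative at I₀ vanishes
  have hd0 : fderiv ℝ h I₀ w = 0 := by
    have := hvan 1 le_rfl
    rwa [iteratedFDeriv_one_apply] at this
  -- g := h ∘ φ, analytic on Ioo (-ϱ) ϱ
  set g : ℝ → ℝ := fun t => h (φ t) with hg
  have hφan : ∀ t : ℝ, AnalyticAt ℝ φ t := by
    intro t
    apply analyticAt_const.add
    exact ((ContinuousLinearMap.toSpanSingleton ℝ w).analyticAt t)
  have hgan : AnalyticOnNhd ℝ g (Set.Ioo (-ϱ) ϱ) := by
    intro t ht
    exact (hreg (φ t) (hmem t ht)).comp (hφan t)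
  -- g is eventually constant near 0
  obtain ⟨p, r, hp⟩ := hreg I₀ hI₀mem
  have hev : g =ᶠ[nhds (0:ℝ)] fun _ => h I₀ := by
    have hcont : Continuous fun t : ℝ => t • w := by fun_prop
    have hball : {t : ℝ | t • w ∈ EMetric.ball (0 : EuclideanSpace ℝ (Fin n)) r} ∈ nhds (0:ℝ) := by
      apply hcont.continuousAt.preimage_mem_nhds
      rw [zero_smul]
      exact EMetric.ball_mem_nhds _ hp.r_pos
    filter_upwards [hball] with t ht
    have hsum := hp.hasSum_iteratedFDeriv ht
    have heq : (fun k => ((k.factorial : ℝ))⁻¹ • iteratedFDeriv ℝ k h I₀ fun _ => t • w) =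
        fun k => if k = 0 then h I₀ else 0 := by
      funext k
      rcases Nat.eq_zero_or_pos k with hk | hk
      · subst hk; simp [iteratedFDeriv_zero_apply]
      · have h1 : (fun _ : Fin k => t • w) = fun i => t • (fun _ : Fin k => w) i := rfl
        rw [if_neg hk.ne', h1,
          (iteratedFDeriv ℝ k h I₀).map_smul_univ (fun _ => t) (fun _ => w),
          hvan k hk]
        simp
      
    rw [heq] at hsum
    have := (hasSum_ite_eq (0:ℕ) (h I₀)).unique hsum
    simpa [hg, hφ] using this.symm
  -- identity theorem: g is constant on Ioo (-ϱ) ϱ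
  have hconst : Set.EqOn g (fun _ => h I₀) (Set.Ioo (-ϱ) ϱ) := by
    apply hgan.eqOn_of_preconnected_of_eventuallyEq analyticOnNhd_const
      (isPreconnected_Ioo) (⟨by linarith, hϱ⟩ : (0:ℝ) ∈ Set.Ioo (-ϱ) ϱ) hev
  -- hence the directional derivative along w vanishes on the segment
  have hderiv : ∀ t ∈ Set.Ioo (-ϱ) ϱ, fderiv ℝ h (φ t) w = 0 := by
    intro t ht
    have hdiff : DifferentiableAt ℝ h (φ t) := (hreg (φ t) (hmem t ht)).differentiableAt
    have hφd : HasDerivAt φ w t := by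
      have : HasDerivAt (fun s : ℝ => s • w) ((1:ℝ) • w) t := (hasDerivAt_id t).smul_const w
      simpa [hφ] using this.const_add I₀
    have hgd : HasDerivAt g (fderiv ℝ h (φ t) w) t :=
      (hdiff.hasFDerivAt.comp_hasDerivAt t hφd)
    have hglocal : g =ᶠ[nhds t] fun _ => h I₀ :=
      Filter.eventuallyEq_of_mem (isOpen_Ioo.mem_nhds ht) hconst
    have : deriv g t = 0 := by
      rw [Filter.EventuallyEq.deriv_eq hglocal, deriv_const]
    rwa [hgd.deriv] at this
  -- inner products with the gradient vanish on the segment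
  have hinner0 : ∀ t ∈ Set.Ioo (-ϱ) ϱ, ⟪w, gradient h (φ t)⟫ = 0 := by
    intro t ht
    rw [real_inner_comm, hinner _ ((hreg (φ t) (hmem t ht)).differentiableAt), hderiv t ht]
  -- part 2
  have part2 : ∀ t ∈ Set.Ioo (-ϱ) ϱ,
      (Submodule.span ℝ {w}).orthogonalProjectionOnto (gradient h (I₀ + t • w)) = 0 := by
    intro t ht
    rw [Submodule.orthogonalProjectionOnto_eq_zero_iff]
    rw [Submodule.mem_orthogonal]
    intro u hu
    obtain ⟨c, rfl⟩ := Submodule.mem_span_singleton.mp hu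
    rw [real_inner_smul_left, hinner0 t ht, mul_zero]
  refine ⟨?_, part2, ?_⟩
  · intro u hu
    obtain ⟨c, rfl⟩ := Submodule.mem_span_singleton.mp hu
    have h0 : ⟪w, gradient h I₀⟫ = 0 := by
      have := hinner0 0 ⟨by linarith, hϱ⟩
      simpa [hφ] using this
    rw [real_inner_smul_left, h0, mul_zero]
  · intro C hC δ hδ α hα hsteep
    set ξ : ℝ := min δ (ϱ/2) with hξ
    have hξpos : 0 < ξ := lt_min hδ (by linarith)
    obtain ⟨η, hη, hall⟩ := hsteep ξ ⟨hξpos, min_le_left _ _⟩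
    have hηmem : η ∈ Set.Ioo (-ϱ) ϱ := by
      constructor
      · linarith [hη.1]
      · have : ξ ≤ ϱ/2 := min_le_right _ _
        linarith [hη.2]
    have huw : (η • w) ∈ Submodule.span ℝ {w} := Submodule.smul_mem _ _ (Submodule.mem_span_singleton_self w)
    have hnorm : ‖η • w‖ = η := by
      rw [norm_smul, hw, mul_one, Real.norm_eq_abs, abs_of_nonneg hη.1]
    have := hall (η • w) huw hnorm
    rw [part2 η hηmem] at this
    simp only [ZeroMemClass.coe_zero, norm_zero] at this
    have : 0 < C * ξ ^ α := by positivity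
    linarith
end
end

section
/- (Theorem C1: steepness with index one on subspaces where the restricted Hessian is non-degenerate.) Let r ≥ 2 and n ≥ 3 be integers and m ∈ {2,…,n−1}. Let h be of class C^{2r−1} on a neighborhood of the origin of ℝⁿ with ∇h(0) ≠ 0. Let Γ ⊆ ℝⁿ be an m-dimensional linear subspace orthogonal to ∇h(0) such that the restriction to Γ × Γ of the Hessian bilinear form (u,v) ↦ h²₀[u,v] of h at the origin is non-degenerate. Then there exist C > 0 and δ > 0 such that the steepness inequality holds at 0 on Γ with coefficients C, δ and index 1. -/
open Metric Set
open scoped RealInnerProductSpace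

noncomputable section

set_option maxHeartbeats 1000000 in
/-- Theorem C1: steepness with index one on subspaces where the restricted Hessian
is non-degenerate. -/
theorem statement7 (r n m : ℕ) (hr : 2 ≤ r) (hn : 3 ≤ n) (hm : 2 ≤ m ∧ m ≤ n - 1)
    (h : EuclideanSpace ℝ (Fin n) → ℝ) (hreg : ContDiffAt ℝ (2*r-1 : ℕ) h 0)
    (hgrad : gradient h 0 ≠ 0)
    (Γ : Submodule ℝ (EuclideanSpace ℝ (Fin n))) (hΓdim : Module.finrank ℝ Γ = m)
    (hΓperp : ∀ u ∈ Γ, ⟪u, gradient h 0⟫ = 0)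
    (hnondeg : ∀ u ∈ Γ, (∀ v ∈ Γ, iteratedFDeriv ℝ 2 h 0 ![u, v] = 0) → u = 0) :
    ∃ C > (0:ℝ), ∃ δ > (0:ℝ), SteepAt h 0 Γ C δ 1 := by
  classical
  -- regularity: h is C² at 0
  have h2 : ContDiffAt ℝ 2 h 0 := by
    have h3 : (2:ℕ) ≤ 2*r-1 := by omega
    exact hreg.of_le (by exact_mod_cast h3)
  have hfd1 : ContDiffAt ℝ 1 (fderiv ℝ h) 0 := h2.fderiv_right (by norm_num)
  have hdiff : DifferentiableAt ℝ (fderiv ℝ h) 0 := hfd1.differentiableAt one_ne_zero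
  set D := fderiv ℝ (fderiv ℝ h) 0 with hDdef
  have hD : HasFDerivAt (fderiv ℝ h) D 0 := hdiff.hasFDerivAt
  set ℓ := (InnerProductSpace.toDual ℝ (EuclideanSpace ℝ (Fin n))).symm with hℓdef
  -- the map S : Γ → Γ, u ↦ π_Γ (Hessian u)
  set S : Γ →ₗ[ℝ] Γ :=
    { toFun := fun u => Γ.orthogonalProjectionOnto (ℓ (D u))
      map_add' := by intro u v; simp
      map_smul' := by intro c u; simp } with hSdef
  have hSapp : ∀ u : Γ, S u = Γ.orthogonalProjectionOnto (ℓ (D u)) := fun _ => rfl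
  have hinner : ∀ w v : EuclideanSpace ℝ (Fin n), ⟪ℓ (D w), v⟫ = D w v := by
    intro w v
    exact InnerProductSpace.toDual_symm_apply
  -- S is injective
  have hSinj : Function.Injective S := by
    rw [injective_iff_map_eq_zero]
    intro u hu
    have hmem : ℓ (D ↑u) ∈ Γᗮ := Submodule.orthogonalProjectionOnto_eq_zero_iff.mp hu
    have hzero : ∀ v ∈ Γ, iteratedFDeriv ℝ 2 h 0 ![(u:EuclideanSpace ℝ (Fin n)), v] = 0 := by
      intro v hv
      have h1 : ⟪ℓ (D ↑u), v⟫ = 0 := by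
        have := (Submodule.mem_orthogonal Γ _).mp hmem v hv
        rwa [real_inner_comm] at this
      rw [iteratedFDeriv_two_apply]
      have : D ↑u v = 0 := by rw [← hinner]; exact h1
      simpa using this
    have : (u : EuclideanSpace ℝ (Fin n)) = 0 := hnondeg u u.2 hzero
    exact Subtype.ext this
  have hSbij : Function.Bijective S := ⟨hSinj, LinearMap.injective_iff_surjective.mp hSinj⟩
  obtain ⟨K, hK0, hlow⟩ : ∃ K > (0:ℝ), ∀ u : Γ, ‖u‖ ≤ K * ‖S u‖ := by
    let e : Γ ≃L[ℝ] Γ := (LinearEquiv.ofBijective S hSbij).toContinuousLinearEquiv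
    have heS : ∀ u : Γ, e u = S u := fun _ => rfl
    refine ⟨‖(e.symm : Γ →L[ℝ] Γ)‖ + 1, by positivity, ?_⟩
    intro u
    have h1 : u = e.symm (S u) := by rw [← heS]; exact (e.symm_apply_apply u).symm
    calc ‖u‖ = ‖e.symm (S u)‖ := by rw [← h1]
      _ ≤ ‖(e.symm : Γ →L[ℝ] Γ)‖ * ‖S u‖ := (e.symm : Γ →L[ℝ] Γ).le_opNorm _
      _ ≤ (‖(e.symm : Γ →L[ℝ] Γ)‖ + 1) * ‖S u‖ := by
          have := norm_nonneg (S u)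
          nlinarith
  -- the little-o estimate for the derivative of ∇h at 0
  have hev := hD.isLittleO.def (show (0:ℝ) < K⁻¹/2 by positivity)
  rw [Metric.eventually_nhds_iff] at hev
  obtain ⟨δ, hδ0, hδ⟩ := hev
  refine ⟨K⁻¹/4, by positivity, δ/2, by positivity, ?_⟩
  intro ξ hξ
  refine ⟨ξ, ⟨le_of_lt hξ.1, le_refl ξ⟩, ?_⟩
  intro u hu hnu
  have hξδ : ξ ≤ δ/2 := hξ.2
  have hdist : dist u 0 < δ := by
    rw [dist_zero_right, hnu]; linarith
  have herr : ‖fderiv ℝ h u - fderiv ℝ h 0 - D (u - 0)‖ ≤ K⁻¹/2 * ‖u - 0‖ := hδ hdist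
  simp only [sub_zero] at herr
  -- translate to the gradient
  have hgr : ∀ x : EuclideanSpace ℝ (Fin n), gradient h x = ℓ (fderiv ℝ h x) := fun _ => rfl
  have herr' : ‖gradient h u - gradient h 0 - ℓ (D u)‖ ≤ K⁻¹/2 * ξ := by
    have : gradient h u - gradient h 0 - ℓ (D u)
        = ℓ (fderiv ℝ h u - fderiv ℝ h 0 - D u) := by
      rw [hgr, hgr, map_sub, map_sub]
    rw [this, LinearIsometryEquiv.norm_map, ← hnu]
    exact herr
  -- projection of the gradient at 0 vanishes
  have hproj0 : Γ.orthogonalProjectionOnto (gradient h 0) = 0 := by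
    rw [Submodule.orthogonalProjectionOnto_eq_zero_iff]
    rw [Submodule.mem_orthogonal]
    intro w hw
    exact hΓperp w hw
  -- lower bound on the projection of the Hessian term
  have hmain : K⁻¹ * ξ ≤ ‖(Γ.orthogonalProjectionOnto (ℓ (D u)) : EuclideanSpace ℝ (Fin n))‖ := by
    have h1 : ‖(⟨u, hu⟩ : Γ)‖ ≤ K * ‖S ⟨u, hu⟩‖ := hlow ⟨u, hu⟩
    have h2 : ‖(⟨u, hu⟩ : Γ)‖ = ξ := by rw [← hnu]; rfl
    have h3 : ‖S ⟨u, hu⟩‖ = ‖(Γ.orthogonalProjectionOnto (ℓ (D u)) : EuclideanSpace ℝ (Fin n))‖ := by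
      rw [hSapp]; rfl
    rw [h2, h3] at h1
    exact (inv_mul_le_iff₀ hK0).mpr h1
  -- the projection is 1-Lipschitz
  have hπle : ∀ x : EuclideanSpace ℝ (Fin n), ‖(Γ.orthogonalProjectionOnto x : EuclideanSpace ℝ (Fin n))‖ ≤ ‖x‖ := by
    intro x
    calc ‖(Γ.orthogonalProjectionOnto x : EuclideanSpace ℝ (Fin n))‖ = ‖Γ.orthogonalProjectionOnto x‖ := rfl
      _ ≤ ‖Γ.orthogonalProjectionOnto‖ * ‖x‖ := Γ.orthogonalProjectionOnto.le_opNorm x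
      _ ≤ 1 * ‖x‖ := by
          have := Γ.orthogonalProjectionOnto_norm_le
          have := norm_nonneg x
          nlinarith
      _ = ‖x‖ := one_mul ‖x‖
  -- put everything together
  have hdecomp : (Γ.orthogonalProjectionOnto (gradient h u) : EuclideanSpace ℝ (Fin n))
      = (Γ.orthogonalProjectionOnto (gradient h u - gradient h 0 - ℓ (D u)) : EuclideanSpace ℝ (Fin n))
        + (Γ.orthogonalProjectionOnto (ℓ (D u)) : EuclideanSpace ℝ (Fin n)) := by
    rw [map_sub, map_sub, hproj0]
    push_cast
    abel
  have hfinal : K⁻¹/2 * ξ ≤ ‖(Γ.orthogonalProjectionOnto (gradient h u) : EuclideanSpace ℝ (Fin n))‖ := by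
    have htri : ‖(Γ.orthogonalProjectionOnto (ℓ (D u)) : EuclideanSpace ℝ (Fin n))‖
        ≤ ‖(Γ.orthogonalProjectionOnto (gradient h u) : EuclideanSpace ℝ (Fin n))‖
          + ‖(Γ.orthogonalProjectionOnto (gradient h u - gradient h 0 - ℓ (D u)) : EuclideanSpace ℝ (Fin n))‖ := by
      have : (Γ.orthogonalProjectionOnto (ℓ (D u)) : EuclideanSpace ℝ (Fin n))
          = (Γ.orthogonalProjectionOnto (gradient h u) : EuclideanSpace ℝ (Fin n))
            - (Γ.orthogonalProjectionOnto (gradient h u - gradient h 0 - ℓ (D u)) : EuclideanSpace ℝ (Fin n)) := by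
        rw [hdecomp]; abel
      rw [this]
      exact norm_sub_le _ _
    have hsmall : ‖(Γ.orthogonalProjectionOnto (gradient h u - gradient h 0 - ℓ (D u)) : EuclideanSpace ℝ (Fin n))‖
        ≤ K⁻¹/2 * ξ := le_trans (hπle _) herr'
    have := hmain
    linarith
  have hKinv : (0:ℝ) < K⁻¹ := by positivity
  have : K⁻¹/4 * ξ < K⁻¹/2 * ξ := by nlinarith [hξ.1]
  calc K⁻¹/4 * ξ ^ (1:ℝ) = K⁻¹/4 * ξ := by rw [Real.rpow_one]
    _ < K⁻¹/2 * ξ := this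
    _ ≤ ‖(Γ.orthogonalProjectionOnto (gradient h (0 + u)) : EuclideanSpace ℝ (Fin n))‖ := by rw [zero_add]; exact hfinal

end
end
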